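/- For every order ν > 0 and every n ≥ 1, the n-th positive zero j_{ν+1,n} of the Bessel function J_{ν+1} is strictly less than the (n+1)-th positive zero j'_{ν,n+1} of the derivative J'_ν. -/

import Mathlib

open Real Filter Topology

/-- Bessel function of the first kind of order `ν` (power-series definition,
valid for `x > 0`). -/
noncomputable def besselJ (ν x : ℝ) : ℝ :=
  ∑' k : ℕ, ((-1 : ℝ) ^ k / ((k.factorial : ℝ) * Real.Gamma (ν + k + 1))) *
    (x / 2) ^ (2 * (k : ℝ) + ν)

/-- Bessel function of the second kind of order `ν`. -/
noncomputable def besselY (ν x : ℝ) : ℝ :=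
  (besselJ ν x * Real.cos (ν * π) - besselJ (-ν) x) / Real.sin (ν * π)

/-- `z` enumerates (0-indexed, in increasing order) all the positive zeros of `f`;
so `z (n-1)` is the `n`-th positive zero. -/
def IsZeroSeq (f : ℝ → ℝ) (z : ℕ → ℝ) : Prop :=
  StrictMono z ∧ (∀ n, 0 < z n) ∧ (∀ n, f (z n) = 0) ∧
    ∀ x, 0 < x → f x = 0 → ∃ n, z n = x

/-- The Wronskian-type function `W_{Ll}`. -/
noncomputable def WronskianW (L l x : ℝ) : ℝ :=
  π * x / 2 * (besselJ (L + 1/2) x * deriv (besselY (l + 1/2)) x -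
    deriv (besselJ (L + 1/2)) x * besselY (l + 1/2) x)

/-- Regular Riccati–Bessel function. -/
noncomputable def riccatiU (ν x : ℝ) : ℝ := Real.sqrt (π * x / 2) * besselJ (ν + 1/2) x

/-- Irregular Riccati–Bessel function. -/
noncomputable def riccatiV (ν x : ℝ) : ℝ := Real.sqrt (π * x / 2) * besselY (ν + 1/2) x


noncomputable def bc (μ : ℝ) (k : ℕ) : ℝ :=
  (-1 : ℝ) ^ k / ((k.factorial : ℝ) * Real.Gamma (μ + k + 1))

noncomputable def bF (μ : ℝ) (t : ℝ) : ℝ := ∑' k : ℕ, bc μ k * t ^ k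

lemma Gamma_prod (μ : ℝ) (hμ : 0 < μ) (k : ℕ) :
    Real.Gamma (μ + k + 1) = Real.Gamma (μ + 1) * ∏ i ∈ Finset.range k, (μ + i + 1) := by
  induction k with
  | zero => simp
  | succ k ih =>
    have h1 : μ + (k + 1 : ℕ) + 1 = (μ + k + 1) + 1 := by push_cast; ring
    rw [h1, Real.Gamma_add_one (by positivity), ih, Finset.prod_range_succ]
    ring

lemma Gamma_rec (μ : ℝ) (hμ : 0 < μ) (k : ℕ) :
    Real.Gamma (μ + k + 2) = (μ + k + 1) * Real.Gamma (μ + k + 1) := by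
  have := Real.Gamma_add_one (s := μ + k + 1) (by positivity)
  rw [show μ + (k:ℝ) + 2 = (μ + k + 1) + 1 by ring, this]

lemma prod_ge_one (μ : ℝ) (hμ : 0 < μ) (k : ℕ) :
    (1:ℝ) ≤ ∏ i ∈ Finset.range k, (μ + i + 1) := by
  induction k with
  | zero => simp
  | succ k ih =>
    rw [Finset.prod_range_succ]
    have : (0:ℝ) ≤ k := Nat.cast_nonneg k
    nlinarith

lemma prod_ge (μ : ℝ) (hμ : 0 < μ) (k : ℕ) (hk : 1 ≤ k) :
    (μ + 1) ≤ ∏ i ∈ Finset.range k, (μ + i + 1) := by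
  obtain ⟨m, rfl⟩ := Nat.exists_eq_add_of_le hk
  induction m with
  | zero => simp
  | succ m ih =>
    rw [show 1 + (m+1) = (1+m) + 1 by ring, Finset.prod_range_succ]
    have h2 : (0:ℝ) ≤ ((1+m : ℕ) : ℝ) := Nat.cast_nonneg _
    have h3 := ih (by omega)
    nlinarith

lemma Gamma_ge (μ : ℝ) (hμ : 0 < μ) (k : ℕ) (hk : 1 ≤ k) :
    (μ + 1) * Real.Gamma (μ + 1) ≤ Real.Gamma (μ + k + 1) := by
  rw [Gamma_prod μ hμ k]
  have hg : 0 < Real.Gamma (μ + 1) := Real.Gamma_pos_of_pos (by linarith)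
  nlinarith [prod_ge μ hμ k hk]

lemma Gamma_ge_one (μ : ℝ) (hμ : 0 < μ) (k : ℕ) :
    Real.Gamma (μ + 1) ≤ Real.Gamma (μ + k + 1) := by
  rw [Gamma_prod μ hμ k]
  nlinarith [prod_ge_one μ hμ k, Real.Gamma_pos_of_pos (show (0:ℝ) < μ + 1 by linarith)]

lemma Gamma_pos' (μ : ℝ) (hμ : 0 < μ) (k : ℕ) : 0 < Real.Gamma (μ + k + 1) :=
  Real.Gamma_pos_of_pos (by positivity)

lemma bc_abs_le (μ : ℝ) (hμ : 0 < μ) (k : ℕ) :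
    |bc μ k| ≤ 1 / (Real.Gamma (μ + 1) * k.factorial) := by
  have hg : 0 < Real.Gamma (μ + k + 1) := Gamma_pos' μ hμ k
  have hg1 : 0 < Real.Gamma (μ + 1) := Real.Gamma_pos_of_pos (by linarith)
  have hf : (0:ℝ) < k.factorial := by positivity
  rw [bc, abs_div, abs_pow, abs_neg, abs_one, one_pow, abs_of_pos (by positivity)]
  rw [div_le_div_iff₀ (by positivity) (by positivity)]
  have := Gamma_ge_one μ hμ k
  nlinarith

lemma bc_summable (μ : ℝ) (hμ : 0 < μ) (t : ℝ) :
    Summable (fun k : ℕ => bc μ k * t ^ k) := by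
  have hg1 : 0 < Real.Gamma (μ + 1) := Real.Gamma_pos_of_pos (by linarith)
  have hcomp : ∀ k : ℕ, ‖bc μ k * t ^ k‖ ≤ (1 / Real.Gamma (μ + 1)) * (|t| ^ k / k.factorial) := by
    intro k
    rw [Real.norm_eq_abs, abs_mul, abs_pow]
    have h1 := bc_abs_le μ hμ k
    have hf : (0:ℝ) < k.factorial := by positivity
    calc |bc μ k| * |t| ^ k ≤ (1 / (Real.Gamma (μ + 1) * k.factorial)) * |t| ^ k :=
          mul_le_mul_of_nonneg_right h1 (by positivity)
    _ = (1 / Real.Gamma (μ + 1)) * (|t| ^ k / k.factorial) := by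
          field_simp
  exact Summable.of_norm_bounded ((Real.summable_pow_div_factorial |t|).mul_left _) hcomp
noncomputable def bTail (t : ℝ) : ℝ := ∑' k : ℕ, t ^ (k+1) / (k+1).factorial

lemma bTail_summable (t : ℝ) : Summable (fun k : ℕ => t ^ (k+1) / (k+1).factorial) :=
  (summable_nat_add_iff 1).2 (Real.summable_pow_div_factorial t)

lemma bTail_nonneg {t : ℝ} (ht : 0 ≤ t) : 0 ≤ bTail t :=
  tsum_nonneg (fun k => by positivity)

lemma bTail_le {t : ℝ} (ht0 : 0 ≤ t) (ht1 : t ≤ 1) : bTail t ≤ 4 * t := by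
  have h1 : ∀ k : ℕ, t ^ (k+1) / (k+1).factorial ≤ t * (2 * (1/2) ^ k) := by
    intro k
    have hfact : (2:ℝ) ^ k ≤ (k+1).factorial := by
      induction k with
      | zero => simp
      | succ k ih =>
        rw [pow_succ, Nat.factorial_succ]
        push_cast
        have h2 : (2:ℝ) ≤ (k + 1 + 1 : ℝ) := by
          have : (0:ℝ) ≤ k := Nat.cast_nonneg k
          linarith
        nlinarith [pow_pos (show (0:ℝ)<2 by norm_num) k]
    have hf : (0:ℝ) < (k+1).factorial := by positivity
    have htk : t ^ (k+1) ≤ t := by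
      calc t ^ (k+1) = t * t ^ k := by ring
      _ ≤ t * 1 := by
          apply mul_le_mul_of_nonneg_left _ ht0
          exact pow_le_one₀ ht0 ht1
      _ = t := by ring
    have h2 : t ^ (k+1) / (k+1).factorial ≤ t / 2 ^ k := by
      rw [div_le_div_iff₀ hf (by positivity)]
      have h2k : (0:ℝ) < 2 ^ k := by positivity
      nlinarith [pow_nonneg ht0 (k+1)]
    calc t ^ (k+1) / (k+1).factorial ≤ t / 2 ^ k := h2
    _ = t * (1/2)^k := by rw [div_eq_mul_inv, one_div, inv_pow]
    _ ≤ t * (2 * (1/2) ^ k) := by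
        apply mul_le_mul_of_nonneg_left _ ht0
        nlinarith [pow_pos (show (0:ℝ)<1/2 by norm_num) k]
  have h2 : Summable (fun k : ℕ => t * (2 * (1/2:ℝ) ^ k)) :=
    ((summable_geometric_of_lt_one (by norm_num) (by norm_num)).mul_left 2).mul_left t
  calc bTail t ≤ ∑' k : ℕ, t * (2 * (1/2:ℝ) ^ k) := Summable.tsum_le_tsum h1 (bTail_summable t) h2
  _ = t * (2 * (1 - 1/2)⁻¹) := by
      rw [tsum_mul_left, tsum_mul_left, tsum_geometric_of_lt_one (by norm_num) (by norm_num)]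
  _ = 4 * t := by norm_num; ring
  
lemma bc_zero (μ : ℝ) : bc μ 0 = 1 / Real.Gamma (μ + 1) := by
  simp [bc]

set_option maxHeartbeats 1000000 in
lemma bF_head_bound (μ : ℝ) (hμ : 0 < μ) {t : ℝ} (ht : 0 ≤ t) :
    |bF μ t - 1 / Real.Gamma (μ + 1)| ≤ bTail t / ((μ + 1) * Real.Gamma (μ + 1)) := by
  have hsum := bc_summable μ hμ t
  have hsum1 : Summable (fun k : ℕ => bc μ (k+1) * t ^ (k+1)) :=
    (summable_nat_add_iff 1).2 hsum
  have hzero : bF μ t = bc μ 0 + ∑' k : ℕ, bc μ (k+1) * t ^ (k+1) := by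
    rw [bF, Summable.tsum_eq_zero_add hsum]
    simp
  rw [hzero, bc_zero, add_sub_cancel_left]
  have hg1 : 0 < Real.Gamma (μ + 1) := Real.Gamma_pos_of_pos (by linarith)
  have hbound : ∀ k : ℕ, |bc μ (k+1) * t ^ (k+1)| ≤
      (1 / ((μ+1) * Real.Gamma (μ+1))) * (t ^ (k+1) / (k+1).factorial) := by
    intro k
    rw [abs_mul, abs_pow, abs_of_nonneg ht]
    have h1 : |bc μ (k+1)| ≤ 1 / ((μ+1) * Real.Gamma (μ+1) * (k+1).factorial) := by
      have hg : 0 < Real.Gamma (μ + (k+1:ℕ) + 1) := Gamma_pos' μ hμ (k+1)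
      have hf : (0:ℝ) < (k+1).factorial := by positivity
      rw [bc, abs_div, abs_pow, abs_neg, abs_one, one_pow, abs_of_pos (by positivity)]
      rw [div_le_div_iff₀ (by positivity) (by positivity)]
      have := Gamma_ge μ hμ (k+1) (by omega)
      nlinarith
    have hf : (0:ℝ) < (k+1).factorial := by positivity
    calc |bc μ (k+1)| * t ^ (k+1) ≤ (1 / ((μ+1) * Real.Gamma (μ+1) * (k+1).factorial)) * t ^ (k+1) :=
          mul_le_mul_of_nonneg_right h1 (by positivity)
    _ = (1 / ((μ+1) * Real.Gamma (μ+1))) * (t ^ (k+1) / (k+1).factorial) := by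
          field_simp
  calc |∑' k : ℕ, bc μ (k+1) * t ^ (k+1)| ≤
        ∑' k : ℕ, (1 / ((μ+1) * Real.Gamma (μ+1))) * (t ^ (k+1) / (k+1).factorial) := by
        rw [← Real.norm_eq_abs]
        apply (norm_tsum_le_tsum_norm ?_).trans
        · apply Summable.tsum_le_tsum (fun k => hbound k) ?_ ?_
          · exact hsum1.abs
          · exact (bTail_summable t).mul_left _
        · exact hsum1.abs
  _ = (1 / ((μ+1) * Real.Gamma (μ+1))) * bTail t := by rw [tsum_mul_left]; rfl
  _ = bTail t / ((μ+1) * Real.Gamma (μ+1)) := by ring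

lemma bF_pos (μ : ℝ) (hμ : 0 < μ) {t : ℝ} (ht : 0 ≤ t) (hlt : bTail t < μ + 1) :
    0 < bF μ t := by
  have hg1 : 0 < Real.Gamma (μ + 1) := Real.Gamma_pos_of_pos (by linarith)
  have h1 := bF_head_bound μ hμ ht
  have h2 := abs_le.1 h1
  have h3 : bTail t / ((μ + 1) * Real.Gamma (μ + 1)) < 1 / Real.Gamma (μ + 1) := by
    rw [div_lt_div_iff₀ (by positivity) (by positivity)]
    nlinarith
  linarith [h2.1]

lemma bF_lt (μ : ℝ) (hμ : 0 < μ) {t : ℝ} (ht : 0 ≤ t) (hlt : bTail t < μ + 1) :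
    bF μ t < 2 / Real.Gamma (μ + 1) := by
  have hg1 : 0 < Real.Gamma (μ + 1) := Real.Gamma_pos_of_pos (by linarith)
  have h2 := abs_le.1 (bF_head_bound μ hμ ht)
  have h3 : bTail t / ((μ + 1) * Real.Gamma (μ + 1)) < 1 / Real.Gamma (μ + 1) := by
    rw [div_lt_div_iff₀ (by positivity) (by positivity)]
    nlinarith
  have : bF μ t ≤ 1 / Real.Gamma (μ+1) + bTail t / ((μ + 1) * Real.Gamma (μ + 1)) := by
    linarith [h2.2]
  calc bF μ t ≤ 1 / Real.Gamma (μ+1) + bTail t / ((μ + 1) * Real.Gamma (μ + 1)) := this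
  _ < 1 / Real.Gamma (μ+1) + 1 / Real.Gamma (μ+1) := by linarith
  _ = 2 / Real.Gamma (μ+1) := by ring
lemma bc_ne_zero_denom (μ : ℝ) (hμ : 0 < μ) (k : ℕ) : Real.Gamma (μ + k + 1) ≠ 0 :=
  (Gamma_pos' μ hμ k).ne'

lemma bc_deriv_coeff (μ : ℝ) (hμ : 0 < μ) (k : ℕ) :
    ((k:ℝ) + 1) * bc μ (k+1) = - bc (μ+1) k := by
  have h1 : μ + ((k:ℕ)+1 : ℕ) + 1 = μ + k + 2 := by push_cast; ring
  have h2 : μ + 1 + k + 1 = μ + k + 2 := by ring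
  rw [bc, bc, h1, h2]
  have hg : Real.Gamma (μ + k + 2) ≠ 0 := by
    have : (0:ℝ) < μ + k + 2 := by positivity
    exact (Real.Gamma_pos_of_pos this).ne'
  have hf : ((k+1).factorial : ℝ) = (k+1) * k.factorial := by
    rw [Nat.factorial_succ]; push_cast; ring
  rw [hf, pow_succ]
  have hfk : (k.factorial : ℝ) ≠ 0 := Nat.cast_ne_zero.2 k.factorial_ne_zero
  field_simp

lemma bc_three_coeff (μ : ℝ) (hμ : 0 < μ) (k : ℕ) :
    (μ+1) * bc (μ+1) (k+1) - bc μ (k+1) = bc (μ+2) k := by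
  have h1 : μ + 1 + ((k:ℕ)+1 : ℕ) + 1 = μ + k + 3 := by push_cast; ring
  have h2 : μ + ((k:ℕ)+1 : ℕ) + 1 = μ + k + 2 := by push_cast; ring
  have h3 : μ + 2 + k + 1 = μ + k + 3 := by ring
  rw [bc, bc, bc, h1, h2, h3]
  have hrec : Real.Gamma (μ + k + 3) = (μ + k + 2) * Real.Gamma (μ + k + 2) := by
    have := Real.Gamma_add_one (s := μ + k + 2) (by positivity)
    rw [show μ + (k:ℝ) + 3 = (μ + k + 2) + 1 by ring, this]
  have hg2 : (0:ℝ) < Real.Gamma (μ + k + 2) := Real.Gamma_pos_of_pos (by positivity)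
  have hf : ((k+1).factorial : ℝ) = (k+1) * k.factorial := by
    rw [Nat.factorial_succ]; push_cast; ring
  rw [hrec, hf, pow_succ]
  have hfk : (k.factorial : ℝ) ≠ 0 := Nat.cast_ne_zero.2 k.factorial_ne_zero
  have hk2 : (μ + (k:ℝ) + 2) ≠ 0 := ne_of_gt (by positivity)
  field_simp
  ring

lemma bc_deriv_summable (μ : ℝ) (hμ : 0 < μ) {R : ℝ} (hRnn : 0 ≤ R) :
    Summable (fun k : ℕ => |bc μ k| * ((k:ℝ) * R ^ (k-1))) := by
  rw [← summable_nat_add_iff 1]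
  have heq : ∀ k : ℕ, |bc μ (k+1)| * (((k:ℝ)+1) * R ^ k) = |bc (μ+1) k| * R ^ k := by
    intro k
    have := bc_deriv_coeff μ hμ k
    have h2 : |((k:ℝ)+1) * bc μ (k+1)| = |bc (μ+1) k| := by rw [this, abs_neg]
    rw [abs_mul, abs_of_nonneg (by positivity : (0:ℝ) ≤ (k:ℝ)+1)] at h2
    calc |bc μ (k+1)| * (((k:ℝ)+1) * R ^ k) = (((k:ℝ)+1) * |bc μ (k+1)|) * R ^ k := by ring
    _ = |bc (μ+1) k| * R ^ k := by rw [h2]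
  have hsum : Summable (fun k : ℕ => |bc (μ+1) k| * R ^ k) := by
    have h1 : Summable (fun k : ℕ => |bc (μ+1) k * R ^ k|) := (bc_summable (μ+1) (by linarith) R).abs
    apply h1.congr
    intro k
    rw [abs_mul, abs_pow, abs_of_nonneg hRnn]
  apply hsum.congr
  intro k
  calc |bc (μ+1) k| * R ^ k = |bc μ (k+1)| * (((k:ℝ)+1) * R ^ k) := (heq k).symm
  _ = |bc μ (k+1)| * ((((k+1:ℕ)):ℝ) * R ^ ((k+1)-1)) := by push_cast; ring

lemma hasDerivAt_bF (μ : ℝ) (hμ : 0 < μ) (t : ℝ) :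
    HasDerivAt (bF μ) (- bF (μ+1) t) t := by
  set R : ℝ := |t| + 1 with hR
  have hRpos : 0 < R := by positivity
  have htR : t ∈ Metric.ball (0:ℝ) R :=
    Metric.mem_ball.2 (by rw [Real.dist_eq, sub_zero]; simp only [hR]; linarith)
  have hmain : HasDerivAt (fun z => ∑' k : ℕ, bc μ k * z ^ k)
      (∑' k : ℕ, bc μ k * ((k:ℝ) * t ^ (k-1))) t := by
    apply hasDerivAt_tsum_of_isPreconnected
      (u := fun k : ℕ => |bc μ k| * ((k:ℝ) * R ^ (k-1)))
      (bc_deriv_summable μ hμ hRpos.le) Metric.isOpen_ball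
      (convex_ball (0:ℝ) R).isPreconnected
      (g' := fun k y => bc μ k * ((k:ℝ) * y ^ (k-1)))
      (fun k y _ => (hasDerivAt_pow k y).const_mul (bc μ k))
      ?_ (Metric.mem_ball_self hRpos) (bc_summable μ hμ 0) htR
    · intro k y hy
      rw [Real.norm_eq_abs, abs_mul]
      apply mul_le_mul_of_nonneg_left ?_ (abs_nonneg _)
      rw [abs_mul, abs_of_nonneg (Nat.cast_nonneg k : (0:ℝ) ≤ k), abs_pow]
      apply mul_le_mul_of_nonneg_left ?_ (Nat.cast_nonneg k)
      apply pow_le_pow_left₀ (abs_nonneg y)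
      simp [Real.dist_eq] at hy
      linarith [le_abs_self y, neg_abs_le y]
  have hderiv_eq : (∑' k : ℕ, bc μ k * ((k:ℝ) * t ^ (k-1))) = - bF (μ+1) t := by
    have hsum : Summable (fun k : ℕ => bc μ k * ((k:ℝ) * t ^ (k-1))) := by
      apply Summable.of_abs
      apply (bc_deriv_summable μ hμ (abs_nonneg t)).of_nonneg_of_le (fun k => abs_nonneg _) (fun k => ?_)
      rw [abs_mul]
      apply mul_le_mul_of_nonneg_left ?_ (abs_nonneg _)
      rw [abs_mul, abs_of_nonneg (Nat.cast_nonneg k : (0:ℝ) ≤ k), abs_pow]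
    rw [Summable.tsum_eq_zero_add hsum]
    simp only [Nat.cast_zero, zero_mul, mul_zero, zero_add]
    have heq : ∀ k : ℕ, bc μ (k+1) * (((k:ℕ)+1:ℝ) * t ^ ((k+1)-1)) = - (bc (μ+1) k * t ^ k) := by
      intro k
      have h1 := bc_deriv_coeff μ hμ k
      have h2 : ((k:ℕ)+1)-1 = k := by omega
      rw [h2]
      calc bc μ (k+1) * (((k:ℝ)+1) * t ^ k) = (((k:ℝ)+1) * bc μ (k+1)) * t ^ k := by ring
      _ = - (bc (μ+1) k * t ^ k) := by rw [h1]; ring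
    calc (∑' k : ℕ, bc μ (k+1) * (((k+1:ℕ):ℝ) * t ^ ((k+1)-1)))
        = ∑' k : ℕ, - (bc (μ+1) k * t ^ k) := by
          apply tsum_congr; intro k
          rw [← heq k]
          push_cast
          ring_nf
    _ = - bF (μ+1) t := by rw [tsum_neg]; rfl
  rw [← hderiv_eq]
  exact hmain

lemma bF_three_term (μ : ℝ) (hμ : 0 < μ) (t : ℝ) :
    bF μ t + t * bF (μ+2) t = (μ+1) * bF (μ+1) t := by
  have hs1 := bc_summable μ hμ t
  have hs2 := bc_summable (μ+1) (by linarith) t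
  have hs3 := bc_summable (μ+2) (by linarith) t
  have key : (μ+1) * bF (μ+1) t - bF μ t = t * bF (μ+2) t := by
    have h1 : (μ+1) * bF (μ+1) t - bF μ t
        = ∑' k : ℕ, ((μ+1) * bc (μ+1) k - bc μ k) * t ^ k := by
      rw [bF, bF, ← tsum_mul_left, ← Summable.tsum_sub (hs2.mul_left (μ+1)) hs1]
      apply tsum_congr; intro k; ring
    have hsumd : Summable (fun k : ℕ => ((μ+1) * bc (μ+1) k - bc μ k) * t ^ k) := by
      apply Summable.congr ((hs2.mul_left (μ+1)).sub hs1)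
      intro k; ring
    have h0 : ((μ+1) * bc (μ+1) 0 - bc μ 0) * t ^ 0 = 0 := by
      rw [bc_zero, bc_zero]
      have : Real.Gamma (μ + 1 + 1) = (μ+1) * Real.Gamma (μ+1) := by
        have := Real.Gamma_add_one (s := μ + 1) (by positivity)
        rw [this]
      rw [this]
      have hg1 : Real.Gamma (μ + 1) ≠ 0 := (Real.Gamma_pos_of_pos (by linarith)).ne'
      field_simp
      simp
    rw [h1, Summable.tsum_eq_zero_add hsumd, h0, zero_add]
    have heq : ∀ k : ℕ, ((μ+1) * bc (μ+1) (k+1) - bc μ (k+1)) * t ^ (k+1)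
        = t * (bc (μ+2) k * t ^ k) := by
      intro k
      rw [bc_three_coeff μ hμ k]
      ring
    calc (∑' k : ℕ, ((μ+1) * bc (μ+1) (k+1) - bc μ (k+1)) * t ^ (k+1))
        = ∑' k : ℕ, t * (bc (μ+2) k * t ^ k) := tsum_congr heq
    _ = t * bF (μ+2) t := by rw [tsum_mul_left]; rfl
  linarith
lemma rpow_split (x : ℝ) (hx : 0 < x) (μ : ℝ) (k : ℕ) :
    (x/2) ^ (2 * (k:ℝ) + μ) = (x^2/4) ^ k * (x/2) ^ μ := by
  have h2 : (0:ℝ) < x/2 := by linarith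
  rw [Real.rpow_add h2]
  congr 1
  rw [show (2 * (k:ℝ)) = ((2*k : ℕ) : ℝ) by push_cast; ring, Real.rpow_natCast, pow_mul]
  congr 1
  ring

lemma besselJ_eq (μ x : ℝ) (hx : 0 < x) :
    besselJ μ x = (x/2) ^ μ * bF μ (x^2/4) := by
  rw [besselJ, bF]
  have : ∀ k : ℕ, ((-1 : ℝ) ^ k / ((k.factorial : ℝ) * Real.Gamma (μ + k + 1))) *
      (x / 2) ^ (2 * (k : ℝ) + μ) = (bc μ k * (x^2/4) ^ k) * (x/2) ^ μ := by
    intro k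
    rw [rpow_split x hx μ k, bc]
    ring
  rw [tsum_congr this, tsum_mul_right]
  ring

lemma besselJ_hasDerivAt (μ : ℝ) (hμ : 0 < μ) {x : ℝ} (hx : 0 < x) :
    HasDerivAt (besselJ μ) ((μ/x) * besselJ μ x - besselJ (μ+1) x) x := by
  have h2 : (0:ℝ) < x/2 := by linarith
  have hne : x/2 ≠ 0 := h2.ne'
  -- derivative of x ↦ (x/2)^μ
  have hf : HasDerivAt (fun y : ℝ => (y/2) ^ μ) (μ * (x/2) ^ (μ-1) * (1/2)) x := by
    have hinner : HasDerivAt (fun y : ℝ => y/2) (1/2) x := (hasDerivAt_id x).div_const 2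
    have houter : HasDerivAt (fun y : ℝ => y ^ μ) (μ * (x/2) ^ (μ-1)) (x/2) :=
      Real.hasDerivAt_rpow_const (Or.inl hne)
    exact houter.comp x hinner
  -- derivative of x ↦ bF μ (x^2/4)
  have hu : HasDerivAt (fun y : ℝ => y^2/4) (x/2) x := by
    have := (hasDerivAt_pow 2 x).div_const 4
    refine this.congr_deriv ?_
    push_cast
    ring
  have hg : HasDerivAt (fun y : ℝ => bF μ (y^2/4)) (- bF (μ+1) (x^2/4) * (x/2)) x :=
    HasDerivAt.comp (h₂ := bF μ) x (hasDerivAt_bF μ hμ (x^2/4)) hu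
  have hprod := hf.mul hg
  have hev : (fun y : ℝ => (y/2) ^ μ * bF μ (y^2/4)) =ᶠ[nhds x] besselJ μ := by
    filter_upwards [eventually_gt_nhds hx] with y hy
    exact (besselJ_eq μ y hy).symm
  have hmain := hprod.congr_of_eventuallyEq hev.symm
  refine hmain.congr_deriv ?_
  rw [besselJ_eq μ x hx, besselJ_eq (μ+1) x hx]
  have e1 : (x/2) ^ (μ-1) = (x/2) ^ μ / (x/2) := by
    rw [← Real.rpow_sub_one hne]
  have e2 : (x/2) ^ (μ+1) = (x/2) ^ μ * (x/2) := by
    rw [Real.rpow_add_one hne]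
  rw [e1, e2]
  field_simp
  ring

lemma besselJ_contAt (μ : ℝ) (hμ : 0 < μ) {x : ℝ} (hx : 0 < x) :
    ContinuousAt (besselJ μ) x :=
  (besselJ_hasDerivAt μ hμ hx).continuousAt

lemma besselJ_three_term (μ : ℝ) (hμ : 0 < μ) {x : ℝ} (hx : 0 < x) :
    besselJ μ x + besselJ (μ+2) x = (2*(μ+1)/x) * besselJ (μ+1) x := by
  have h2 : (0:ℝ) < x/2 := by linarith
  have hne : x/2 ≠ 0 := h2.ne'
  have key := bF_three_term μ hμ (x^2/4)
  rw [besselJ_eq μ x hx, besselJ_eq (μ+1) x hx, besselJ_eq (μ+2) x hx]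
  have e2 : (x/2) ^ (μ+2) = (x/2) ^ μ * (x^2/4) := by
    rw [show μ + 2 = (μ+1)+1 by ring, Real.rpow_add_one hne, Real.rpow_add_one hne]
    field_simp
    ring
  have e1 : (x/2) ^ (μ+1) = (x/2) ^ μ * (x/2) := by rw [Real.rpow_add_one hne]
  rw [e1, e2]
  have hxne : x ≠ 0 := hx.ne'
  field_simp
  linear_combination 4 * key
lemma deriv_besselJ (ν : ℝ) (hν : 0 < ν) {x : ℝ} (hx : 0 < x) :
    deriv (besselJ ν) x = (ν/x) * besselJ ν x - besselJ (ν+1) x :=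
  (besselJ_hasDerivAt ν hν hx).deriv

lemma contAt_deriv_besselJ (ν : ℝ) (hν : 0 < ν) {x : ℝ} (hx : 0 < x) :
    ContinuousAt (deriv (besselJ ν)) x := by
  have hev : (fun y => (ν/y) * besselJ ν y - besselJ (ν+1) y) =ᶠ[nhds x] deriv (besselJ ν) := by
    filter_upwards [eventually_gt_nhds hx] with y hy
    exact (deriv_besselJ ν hν hy).symm
  apply ContinuousAt.congr _ hev
  apply ContinuousAt.sub
  · exact ((continuousAt_const.div continuousAt_id hx.ne').mul (besselJ_contAt ν hν hx))
  · exact besselJ_contAt (ν+1) (by linarith) hx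

lemma hasDerivAt_xD (ν : ℝ) (hν : 0 < ν) {x : ℝ} (hx : 0 < x) :
    HasDerivAt (fun y => y * deriv (besselJ ν) y)
      ((ν^2/x - x) * besselJ ν x) x := by
  have hP := besselJ_hasDerivAt ν hν hx
  have hQ := besselJ_hasDerivAt (ν+1) (by linarith) hx
  have hlin : HasDerivAt (fun y => ν * besselJ ν y - y * besselJ (ν+1) y)
      (ν * ((ν/x) * besselJ ν x - besselJ (ν+1) x)
        - (1 * besselJ (ν+1) x + x * (((ν+1)/x) * besselJ (ν+1) x - besselJ (ν+1+1) x))) x := by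
    exact (hP.const_mul ν).sub ((hasDerivAt_id x).mul hQ)
  have hev : (fun y => ν * besselJ ν y - y * besselJ (ν+1) y)
      =ᶠ[nhds x] (fun y => y * deriv (besselJ ν) y) := by
    filter_upwards [eventually_gt_nhds hx] with y hy
    rw [deriv_besselJ ν hν hy]
    field_simp
  have hmain := hlin.congr_of_eventuallyEq hev.symm
  refine hmain.congr_deriv ?_
  have h3 : besselJ ν x + besselJ (ν+1+1) x = (2*(ν+1)/x) * besselJ (ν+1) x := by
    rw [show ν+1+1 = ν+2 by ring]
    exact besselJ_three_term ν hν hx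
  have hxne : x ≠ 0 := hx.ne'
  have h3' : x * (besselJ ν x + besselJ (ν+1+1) x) = 2*(ν+1) * besselJ (ν+1) x := by
    field_simp at h3
    linarith
  field_simp
  linear_combination x * h3'

lemma besselJ_zero_ladder (ν : ℝ) (hν : 0 < ν) {x0 : ℝ} (hx0 : 0 < x0)
    (hP : besselJ ν x0 = 0) (hQ : besselJ (ν+1) x0 = 0) : False := by
  have hall : ∀ m : ℕ, besselJ (ν+m) x0 = 0 ∧ besselJ (ν+m+1) x0 = 0 := by
    intro m
    induction m with
    | zero => simpa using ⟨hP, hQ⟩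
    | succ m ih =>
      obtain ⟨h1, h2⟩ := ih
      have hμ : (0:ℝ) < ν + m := by positivity
      have h3 := besselJ_three_term (ν+m) hμ hx0
      constructor
      · rw [show ν + ((m:ℕ)+1:ℕ) = ν + m + 1 by push_cast; ring]
        exact h2
      · rw [show ν + ((m:ℕ)+1:ℕ) + 1 = ν + m + 2 by push_cast; ring]
        rw [h1, h2] at h3
        linarith [h3]
  set t0 : ℝ := x0^2/4 with ht0
  have ht0nn : 0 ≤ t0 := by positivity
  obtain ⟨m, hm⟩ := exists_nat_gt (bTail t0)
  have hμ : (0:ℝ) < ν + m := by positivity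
  have hFpos : 0 < bF (ν+m) t0 := by
    apply bF_pos (ν+m) hμ ht0nn
    calc bTail t0 < m := hm
    _ ≤ ν + m + 1 := by linarith
  have hzero := (hall m).1
  rw [besselJ_eq (ν+m) x0 hx0] at hzero
  have hpow : (0:ℝ) < (x0/2) ^ (ν+(m:ℝ)) := Real.rpow_pos_of_pos (by linarith) _
  nlinarith

lemma no_double_zero (ν : ℝ) (hν : 0 < ν) {x0 : ℝ} (hx0 : 0 < x0)
    (hP : besselJ ν x0 = 0) (hD : deriv (besselJ ν) x0 = 0) : False := by
  have h1 := deriv_besselJ ν hν hx0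
  rw [hP, hD] at h1
  have hQ : besselJ (ν+1) x0 = 0 := by
    simp at h1
    linarith
  exact besselJ_zero_ladder ν hν hx0 hP hQ

lemma no_QD_zero (ν : ℝ) (hν : 0 < ν) {x0 : ℝ} (hx0 : 0 < x0)
    (hQ : besselJ (ν+1) x0 = 0) (hD : deriv (besselJ ν) x0 = 0) : False := by
  have h1 := deriv_besselJ ν hν hx0
  rw [hQ, hD] at h1
  have hP : besselJ ν x0 = 0 := by
    have hne : ν / x0 ≠ 0 := div_ne_zero hν.ne' hx0.ne'
    have h2 : ν / x0 * besselJ ν x0 = 0 := by linarith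
    rcases mul_eq_zero.1 h2 with h | h
    · exact absurd h hne
    · exact h
  exact besselJ_zero_ladder ν hν hx0 hP hQ
lemma eventually_pos (ν : ℝ) (hν : 0 < ν) :
    ∃ ε : ℝ, 0 < ε ∧ ∀ x : ℝ, 0 < x → x < ε →
      0 < besselJ ν x ∧ 0 < besselJ (ν+1) x ∧ 0 < deriv (besselJ ν) x := by
  refine ⟨min 1 (min ((ν+1)/8) (ν*(ν+1)/8)), by positivity, ?_⟩
  intro x hx hxε
  have hx1 : x < 1 := lt_of_lt_of_le hxε (min_le_left _ _)
  have hx2 : x < (ν+1)/8 := lt_of_lt_of_le hxε ((min_le_right _ _).trans (min_le_left _ _))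
  have hx3 : x < ν*(ν+1)/8 := lt_of_lt_of_le hxε ((min_le_right _ _).trans (min_le_right _ _))
  set t : ℝ := x^2/4 with ht
  have htnn : 0 ≤ t := by positivity
  have hxx : x^2 ≤ x := by nlinarith
  have ht1 : t ≤ 1 := by rw [ht]; nlinarith
  have htx : t < x := by rw [ht]; nlinarith
  have hTail : bTail t ≤ 4 * t := bTail_le htnn ht1
  have hT2 : bTail t ≤ (ν+1)/2 := by
    have : (4:ℝ)*t < 4*x := by linarith
    linarith
  have hg1 : 0 < Real.Gamma (ν+1) := Real.Gamma_pos_of_pos (by linarith)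
  have hA : 1/(2*Real.Gamma (ν+1)) ≤ bF ν t := by
    have h1 := abs_le.1 (bF_head_bound ν hν htnn)
    have h2 : bTail t / ((ν + 1) * Real.Gamma (ν + 1)) ≤ 1/(2*Real.Gamma (ν+1)) := by
      rw [div_le_div_iff₀ (by positivity) (by positivity)]
      nlinarith
    have e : (1:ℝ)/Real.Gamma (ν+1) = 2 * (1/(2*Real.Gamma (ν+1))) := by
      field_simp
    linarith [h1.1]
  have hFν : 0 < bF ν t := by
    apply bF_pos ν hν htnn
    linarith
  have hFν1 : 0 < bF (ν+1) t := by
    apply bF_pos (ν+1) (by linarith) htnn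
    linarith
  have hB : bF (ν+1) t < 2 / Real.Gamma (ν+2) := by
    have := bF_lt (ν+1) (by linarith) htnn (by linarith)
    rw [show ν+1+1 = ν+2 by ring] at this
    exact this
  have hg2 : Real.Gamma (ν+2) = (ν+1) * Real.Gamma (ν+1) := by
    have := Real.Gamma_add_one (s := ν+1) (by positivity)
    rw [show ν + 2 = (ν+1)+1 by ring, this]
  have hpow : (0:ℝ) < (x/2) ^ ν := Real.rpow_pos_of_pos (by linarith) _
  have hP : 0 < besselJ ν x := by
    rw [besselJ_eq ν x hx]
    exact mul_pos hpow hFν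
  have hQeq : besselJ (ν+1) x = (x/2) ^ ν * ((x/2) * bF (ν+1) t) := by
    rw [besselJ_eq (ν+1) x hx, Real.rpow_add_one (by positivity : (x:ℝ)/2 ≠ 0) ν]
    ring
  have hQ : 0 < besselJ (ν+1) x := by
    rw [hQeq]
    apply mul_pos hpow (mul_pos (by linarith) hFν1)
  refine ⟨hP, hQ, ?_⟩
  rw [deriv_besselJ ν hν hx, besselJ_eq ν x hx, hQeq]
  have key : (x/2) * bF (ν+1) t < (ν/x) * bF ν t := by
    have h1 : (x/2) * bF (ν+1) t < (x/2) * (2/Real.Gamma (ν+2)) := by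
      apply mul_lt_mul_of_pos_left hB (by linarith)
    have h2 : (ν/x) * (1/(2*Real.Gamma (ν+1))) ≤ (ν/x) * bF ν t := by
      apply mul_le_mul_of_nonneg_left hA (by positivity)
    have h3 : (x/2) * (2/Real.Gamma (ν+2)) < (ν/x) * (1/(2*Real.Gamma (ν+1))) := by
      rw [hg2, div_mul_div_comm, div_mul_div_comm, div_lt_div_iff₀ (by positivity) (by positivity)]
      have hx2' : 2*x^2 < ν*(ν+1) := by nlinarith
      nlinarith
    linarith
  calc (0:ℝ) = (x/2)^ν * ((x/2) * bF (ν+1) t) - (x/2)^ν * ((x/2) * bF (ν+1) t) := by ring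
  _ < ν / x * ((x / 2) ^ ν * bF ν t) - (x/2)^ν * ((x/2) * bF (ν+1) t) := by
      have := mul_lt_mul_of_pos_left key hpow
      nlinarith [this]
lemma contOn_besselJ (μ : ℝ) (hμ : 0 < μ) {s : Set ℝ} (hs : ∀ y ∈ s, (0:ℝ) < y) :
    ContinuousOn (besselJ μ) s :=
  fun y hy => (besselJ_contAt μ hμ (hs y hy)).continuousWithinAt

lemma contOn_D (ν : ℝ) (hν : 0 < ν) {s : Set ℝ} (hs : ∀ y ∈ s, (0:ℝ) < y) :
    ContinuousOn (deriv (besselJ ν)) s :=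
  fun y hy => (contAt_deriv_besselJ ν hν (hs y hy)).continuousWithinAt

lemma contOn_I (ν : ℝ) (hν : 0 < ν) {s : Set ℝ} (hs : ∀ y ∈ s, (0:ℝ) < y) :
    ContinuousOn (fun y => y * deriv (besselJ ν) y) s :=
  (continuousOn_id).mul (contOn_D ν hν hs)

/-- If `P` has no zero on `[a,b]` and `ν < a`, `D` cannot vanish at both endpoints. -/
lemma rolle_I (ν : ℝ) (hν : 0 < ν) {a b : ℝ} (hνa : ν < a) (hab : a < b)
    (hDa : deriv (besselJ ν) a = 0) (hDb : deriv (besselJ ν) b = 0)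
    (hPne : ∀ y ∈ Set.Icc a b, besselJ ν y ≠ 0) : False := by
  have h0a : 0 < a := lt_trans hν hνa
  have hposIcc : ∀ y ∈ Set.Icc a b, (0:ℝ) < y := fun y hy => lt_of_lt_of_le h0a hy.1
  have hIab : (fun y => y * deriv (besselJ ν) y) a = (fun y => y * deriv (besselJ ν) y) b := by
    simp [hDa, hDb]
  obtain ⟨c, hc, hderiv⟩ := exists_deriv_eq_zero hab (contOn_I ν hν hposIcc) hIab
  have hc0 : 0 < c := lt_trans h0a hc.1
  have hval : deriv (fun y => y * deriv (besselJ ν) y) c = (ν^2/c - c) * besselJ ν c :=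
    (hasDerivAt_xD ν hν hc0).deriv
  rw [hval] at hderiv
  have hPc : besselJ ν c ≠ 0 := hPne c ⟨hc.1.le, hc.2.le⟩
  have hfac : ν^2/c - c ≠ 0 := by
    have hνc : ν < c := lt_trans hνa hc.1
    have : ν^2 < c^2 := by nlinarith
    have : ν^2/c - c < 0 := by
      rw [div_sub' hc0.ne']
      apply div_neg_of_neg_of_pos _ hc0
      nlinarith
    linarith
  exact (mul_ne_zero hfac hPc) hderiv

/-- If the endpoints have the same sign and `D` has no zero inside, `P` has no zero on `[a,b]`. -/
lemma P_ne_on (ν : ℝ) (hν : 0 < ν) {a b : ℝ} (h0a : 0 < a) (hab : a < b)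
    (hDne : ∀ y ∈ Set.Ioo a b, deriv (besselJ ν) y ≠ 0)
    (hsgn : 0 < besselJ ν a * besselJ ν b) :
    ∀ y ∈ Set.Icc a b, besselJ ν y ≠ 0 := by
  intro y hy hzero
  have hposIcc : ∀ z ∈ Set.Icc a b, (0:ℝ) < z := fun z hz => lt_of_lt_of_le h0a hz.1
  have hcont : ContinuousOn (besselJ ν) (Set.Icc a b) := contOn_besselJ ν hν hposIcc
  have hne : (Set.Icc a b).Nonempty := ⟨a, Set.left_mem_Icc.2 hab.le⟩
  have hPane : besselJ ν a ≠ 0 := by intro h; rw [h] at hsgn; simp at hsgn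
  rcases hPane.lt_or_gt with hPa | hPa
  swap
  · -- 0 < P a hence 0 < P b
    have hPb : 0 < besselJ ν b := by nlinarith
    obtain ⟨m, hm_mem, hm⟩ := isCompact_Icc.exists_isMinOn hne hcont
    have hm0 : besselJ ν m ≤ 0 := le_of_le_of_eq (hm hy) hzero
    have hma : m ≠ a := fun h => by rw [h] at hm0; linarith
    have hmb : m ≠ b := fun h => by rw [h] at hm0; linarith
    have hmIoo : m ∈ Set.Ioo a b := ⟨lt_of_le_of_ne hm_mem.1 (Ne.symm hma), lt_of_le_of_ne hm_mem.2 hmb⟩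
    have hloc : IsLocalMin (besselJ ν) m :=
      hm.isLocalMin (Icc_mem_nhds hmIoo.1 hmIoo.2)
    exact hDne m hmIoo hloc.deriv_eq_zero
  · -- P a < 0 hence P b < 0
    have hPb : besselJ ν b < 0 := by nlinarith
    obtain ⟨m, hm_mem, hm⟩ := isCompact_Icc.exists_isMaxOn hne hcont
    have hm0 : 0 ≤ besselJ ν m := le_of_eq_of_le hzero.symm (hm hy)
    have hma : m ≠ a := fun h => by rw [h] at hm0; linarith
    have hmb : m ≠ b := fun h => by rw [h] at hm0; linarith
    have hmIoo : m ∈ Set.Ioo a b := ⟨lt_of_le_of_ne hm_mem.1 (Ne.symm hma), lt_of_le_of_ne hm_mem.2 hmb⟩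
    have hloc : IsLocalMax (besselJ ν) m :=
      hm.isLocalMax (Icc_mem_nhds hmIoo.1 hmIoo.2)
    exact hDne m hmIoo hloc.deriv_eq_zero

lemma exists_Q_zero_between (ν : ℝ) (hν : 0 < ν) {a b : ℝ} (hνa : ν < a) (hab : a < b)
    (hDa : deriv (besselJ ν) a = 0) (hDb : deriv (besselJ ν) b = 0)
    (hDne : ∀ y ∈ Set.Ioo a b, deriv (besselJ ν) y ≠ 0) :
    ∃ c, a < c ∧ c < b ∧ besselJ (ν+1) c = 0 := by
  have h0a : 0 < a := lt_trans hν hνa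
  have h0b : 0 < b := lt_trans h0a hab
  have hPa : besselJ ν a ≠ 0 := fun h => no_double_zero ν hν h0a h hDa
  have hPb : besselJ ν b ≠ 0 := fun h => no_double_zero ν hν h0b h hDb
  have hsign : besselJ ν a * besselJ ν b < 0 := by
    rcases lt_trichotomy (besselJ ν a * besselJ ν b) 0 with h | h | h
    · exact h
    · exact absurd h (mul_ne_zero hPa hPb)
    · exact absurd (rolle_I ν hν hνa hab hDa hDb (P_ne_on ν hν h0a hab hDne h)) (fun f => f)
  -- Q a = (ν/a) P a, Q b = (ν/b) P b
  have hQa : besselJ (ν+1) a = (ν/a) * besselJ ν a := by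
    have := deriv_besselJ ν hν h0a; rw [hDa] at this; linarith
  have hQb : besselJ (ν+1) b = (ν/b) * besselJ ν b := by
    have := deriv_besselJ ν hν h0b; rw [hDb] at this; linarith
  have hQsign : besselJ (ν+1) a * besselJ (ν+1) b < 0 := by
    rw [hQa, hQb]
    have h1 : ν/a > 0 := by positivity
    have h2 : ν/b > 0 := by positivity
    calc (ν/a) * besselJ ν a * ((ν/b) * besselJ ν b)
        = (ν/a) * (ν/b) * (besselJ ν a * besselJ ν b) := by ring
    _ < 0 := mul_neg_of_pos_of_neg (by positivity) hsign
  have hposIcc : ∀ z ∈ Set.Icc a b, (0:ℝ) < z := fun z hz => lt_of_lt_of_le h0a hz.1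
  have hQcont : ContinuousOn (besselJ (ν+1)) (Set.Icc a b) := contOn_besselJ (ν+1) (by linarith) hposIcc
  have hQane : besselJ (ν+1) a ≠ 0 := by intro h; rw [h] at hQsign; simp at hQsign
  rcases hQane.lt_or_gt with hQa0 | hQa0
  · have hQb0 : 0 < besselJ (ν+1) b := by nlinarith
    have h0mem : (0:ℝ) ∈ Set.Ioo (besselJ (ν+1) a) (besselJ (ν+1) b) := ⟨hQa0, hQb0⟩
    obtain ⟨c, hc, hceq⟩ := intermediate_value_Ioo hab.le hQcont h0mem
    exact ⟨c, hc.1, hc.2, hceq⟩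
  · have hQb0 : besselJ (ν+1) b < 0 := by nlinarith
    have h0mem : (0:ℝ) ∈ Set.Ioo (besselJ (ν+1) b) (besselJ (ν+1) a) := ⟨hQb0, hQa0⟩
    obtain ⟨c, hc, hceq⟩ := intermediate_value_Ioo' hab.le hQcont h0mem
    exact ⟨c, hc.1, hc.2, hceq⟩

lemma nu_lt_first_D_zero (ν : ℝ) (hν : 0 < ν) {a : ℝ} (h0a : 0 < a)
    (hDa : deriv (besselJ ν) a = 0)
    (hDne : ∀ y, 0 < y → y < a → deriv (besselJ ν) y ≠ 0) : ν < a := by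
  obtain ⟨ε, hε, hpos⟩ := eventually_pos ν hν
  have hDpos : ∀ y, 0 < y → y < a → 0 < deriv (besselJ ν) y := by
    intro y hy hya
    by_contra hle
    push_neg at hle
    rcases eq_or_lt_of_le hle with heq | hlt
    · exact hDne y hy hya heq
    · set x1 : ℝ := min (ε/2) (y/2) with hx1
      have hx1pos : 0 < x1 := by positivity
      have hx1y : x1 < y := lt_of_le_of_lt (min_le_right _ _) (by linarith)
      have hx1ε : x1 < ε := lt_of_le_of_lt (min_le_left _ _) (by linarith)
      have hD1 : 0 < deriv (besselJ ν) x1 := (hpos x1 hx1pos hx1ε).2.2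
      have hcont : ContinuousOn (deriv (besselJ ν)) (Set.Icc x1 y) :=
        contOn_D ν hν (fun z hz => lt_of_lt_of_le hx1pos hz.1)
      have h0mem : (0:ℝ) ∈ Set.Ioo (deriv (besselJ ν) y) (deriv (besselJ ν) x1) := ⟨hlt, hD1⟩
      obtain ⟨z, hz, hzeq⟩ := intermediate_value_Ioo' hx1y.le hcont h0mem
      exact hDne z (lt_trans hx1pos hz.1) (lt_trans hz.2 hya) hzeq
  have hPpos : ∀ y, 0 < y → y ≤ a → 0 < besselJ ν y := by
    intro y hy hya
    set x1 : ℝ := min (ε/2) (y/2) with hx1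
    have hx1pos : 0 < x1 := by positivity
    have hx1y : x1 < y := lt_of_le_of_lt (min_le_right _ _) (by linarith)
    have hx1ε : x1 < ε := lt_of_le_of_lt (min_le_left _ _) (by linarith)
    have hP1 : 0 < besselJ ν x1 := (hpos x1 hx1pos hx1ε).1
    have hmono : StrictMonoOn (besselJ ν) (Set.Icc x1 y) := by
      apply strictMonoOn_of_deriv_pos (convex_Icc x1 y)
        (contOn_besselJ ν hν (fun z hz => lt_of_lt_of_le hx1pos hz.1))
      intro z hz
      rw [interior_Icc] at hz
      exact hDpos z (lt_trans hx1pos hz.1) (lt_of_lt_of_le hz.2 hya)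
    have := hmono (Set.left_mem_Icc.2 hx1y.le) (Set.right_mem_Icc.2 hx1y.le) hx1y
    linarith
  by_contra hle
  push_neg at hle  -- a ≤ ν
  set x1 : ℝ := min (ε/2) (a/2) with hx1
  have hx1pos : 0 < x1 := by positivity
  have hx1a : x1 < a := lt_of_le_of_lt (min_le_right _ _) (by linarith)
  have hx1ε : x1 < ε := lt_of_le_of_lt (min_le_left _ _) (by linarith)
  have hmono : StrictMonoOn (fun y => y * deriv (besselJ ν) y) (Set.Icc x1 a) := by
    apply strictMonoOn_of_deriv_pos (convex_Icc x1 a)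
      (contOn_I ν hν (fun z hz => lt_of_lt_of_le hx1pos hz.1))
    intro z hz
    rw [interior_Icc] at hz
    have hz0 : 0 < z := lt_trans hx1pos hz.1
    rw [(hasDerivAt_xD ν hν hz0).deriv]
    have hzν : z < ν := lt_of_lt_of_le hz.2 hle
    have hP : 0 < besselJ ν z := hPpos z hz0 hz.2.le
    have : 0 < ν^2/z - z := by
      rw [div_sub' hz0.ne']
      apply div_pos _ hz0
      nlinarith
    exact mul_pos this hP
  have h1 := hmono (Set.left_mem_Icc.2 hx1a.le) (Set.right_mem_Icc.2 hx1a.le) hx1a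
  simp only [hDa, mul_zero] at h1
  have hD1 : 0 < deriv (besselJ ν) x1 := hDpos x1 hx1pos hx1a
  nlinarith

/-- For `ν > 0` and `n ≥ 1`, the `n`-th positive zero of `J_{ν+1}` is strictly
less than the `(n+1)`-th positive zero of `J'_ν`.  (0-indexed sequences.) -/
theorem besselJ_succ_zero_lt_deriv_zero (ν : ℝ) (hν : 0 < ν)
    (jp j' : ℕ → ℝ)
    (hjp : IsZeroSeq (besselJ (ν + 1)) jp)
    (hj' : IsZeroSeq (deriv (besselJ ν)) j') :
    ∀ n : ℕ, jp n < j' (n + 1) := by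
  obtain ⟨hmp, hposp, hzerop, hallp⟩ := hjp
  obtain ⟨hm', hpos', hzero', hall'⟩ := hj'
  -- ν < j' 0
  have hν0 : ν < j' 0 := by
    apply nu_lt_first_D_zero ν hν (hpos' 0) (hzero' 0)
    intro y hy hya hzero
    obtain ⟨k, hk⟩ := hall' y hy hzero
    have : j' 0 ≤ j' k := hm'.monotone (Nat.zero_le k)
    linarith
  -- in each interval (j' m, j' (m+1)) there is a zero of Q
  have hstep : ∀ m : ℕ, ∃ c, j' m < c ∧ c < j' (m+1) ∧ besselJ (ν+1) c = 0 := by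
    intro m
    have hνa : ν < j' m := lt_of_lt_of_le hν0 (hm'.monotone (Nat.zero_le m))
    have hab : j' m < j' (m+1) := hm' (Nat.lt_succ_self m)
    apply exists_Q_zero_between ν hν hνa hab (hzero' m) (hzero' (m+1))
    intro y hy hzero
    obtain ⟨k, hk⟩ := hall' y (lt_trans (hpos' m) hy.1) hzero
    rw [← hk] at hy
    have h1 : m < k := hm'.lt_iff_lt.1 hy.1
    have h2 : k < m + 1 := hm'.lt_iff_lt.1 hy.2
    omega
  choose c hc1 hc2 hc3 using hstep
  -- c m is a zero of Q, hence equals some jp k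
  have hcpos : ∀ m, 0 < c m := fun m => lt_trans (hpos' m) (hc1 m)
  choose k hk using fun m => hallp (c m) (hcpos m) (hc3 m)
  have hkmono : StrictMono k := by
    intro m m' hmm
    apply hmp.lt_iff_lt.1
    rw [hk m, hk m']
    calc c m < j' (m+1) := hc2 m
    _ ≤ j' m' := hm'.monotone (by omega)
    _ < c m' := hc1 m'
  intro n
  by_contra hcon
  push_neg at hcon  -- j' (n+1) ≤ jp n
  have hne : jp n ≠ j' (n+1) := by
    intro h
    exact no_QD_zero ν hν (hposp n) (hzerop n) (h ▸ hzero' (n+1))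
  have hlt : j' (n+1) < jp n := lt_of_le_of_ne hcon (fun h => hne h.symm)
  -- k n ≥ n but jp (k n) = c n < j' (n+1) < jp n so k n < n
  have h1 : (n:ℕ) ≤ k n := hkmono.le_apply
  have h2 : jp (k n) < jp n := by
    rw [hk n]
    calc c n < j' (n+1) := hc2 n
    _ < jp n := hlt
  have h3 : k n < n := hmp.lt_iff_lt.1 h2
  omega
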